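/- Let I be a facet of a subword complex SC(Q,ρ) on a finite Coxeter system. Then the root function r(I,·) : k ↦ Π Q_{[k−1]∖I} (α_{q_k}) restricts to a bijection from the complement of I in [m] onto the inversion set of ρ. -/

import Mathlib

open scoped RealInnerProductSpace

variable {V : Type*} [NormedAddCommGroup V] [InnerProductSpace ℝ V] [FiniteDimensional ℝ V]

/-- The orthogonal reflection interchanging `v` and `-v` and fixing the hyperplane `v^⊥`
pointwise (reflection through the subspace `(ℝ∙v)ᗮ`). -/
noncomputable def reflAlong (v : V) : V ≃ₗᵢ[ℝ] V :=
  Submodule.reflection (Submodule.span ℝ {v})ᗮ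

/-- A finite (essential) reflection group on a Euclidean vector space, together with a
root system and a generic linear functional selecting the positive roots.  This is the
setting of a finite Coxeter system realized geometrically. -/
structure FiniteRootSystem (V : Type*) [NormedAddCommGroup V] [InnerProductSpace ℝ V]
    [FiniteDimensional ℝ V] where
  /-- The reflection group `W`, a subgroup of the orthogonal group. -/
  W : Subgroup (V ≃ₗᵢ[ℝ] V)
  /-- `W` is finite. -/
  finW : Finite W
  /-- The root system `Φ`. -/
  Φ : Set V
  ne_zero : ∀ β ∈ Φ, β ≠ 0
  /-- `Φ` is stable under the action of `W`. -/
  stable : ∀ w ∈ W, ∀ β ∈ Φ, w β ∈ Φ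
  /-- `Φ` contains two opposite roots orthogonal to each reflection hyperplane. -/
  neg_mem : ∀ β ∈ Φ, -β ∈ Φ
  smul_mem : ∀ β ∈ Φ, ∀ c : ℝ, c • β ∈ Φ → c = 1 ∨ c = -1
  refl_mem : ∀ β ∈ Φ, reflAlong β ∈ W
  refl_surj : ∀ g ∈ W, (∃ v : V, v ≠ 0 ∧ g = reflAlong v) → ∃ β ∈ Φ, g = reflAlong β
  /-- `W` is generated by the reflections along the roots. -/
  gen : W = Subgroup.closure {g | ∃ β ∈ Φ, g = reflAlong β}
  /-- The intersection of the reflecting hyperplanes is reduced to `0`. -/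
  essential : ∀ v : V, (∀ β ∈ Φ, ⟪β, v⟫ = 0) → v = 0
  /-- A linear functional not vanishing on any root, splitting `Φ` into positive and
  negative roots. -/
  f : V →ₗ[ℝ] ℝ
  f_ne : ∀ β ∈ Φ, f β ≠ 0

namespace FiniteRootSystem

variable (R : FiniteRootSystem V)

/-- The positive roots. -/
def PosRoots : Set V := {β ∈ R.Φ | 0 < R.f β}

/-- The negative roots. -/
def NegRoots : Set V := {β ∈ R.Φ | R.f β < 0}

/-- The cone generated by the positive roots. -/
def InPosCone (v : V) : Prop :=
  ∃ (s : Finset V) (c : V → ℝ), ↑s ⊆ R.PosRoots ∧ (∀ x ∈ s, 0 ≤ c x) ∧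
    v = ∑ x ∈ s, c x • x

/-- The simple roots: the roots lying on the extremal rays of the cone generated by the
positive roots. -/
def IsSimpleRoot (β : V) : Prop :=
  β ∈ R.PosRoots ∧
    ∀ x y : V, R.InPosCone x → R.InPosCone y → β = x + y → ∃ a : ℝ, 0 ≤ a ∧ x = a • β

/-- The inversion set `inv(w) = Φ⁺ ∩ w(Φ⁻)` of `w`: the positive roots sent to negative
roots by `w⁻¹`. -/
def invSet (w : V ≃ₗᵢ[ℝ] V) : Set V :=
  {β ∈ R.PosRoots | w.symm β ∈ R.NegRoots}

/-- The length of `w`: the smallest number of simple reflections needed to write `w`. -/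
noncomputable def len (w : V ≃ₗᵢ[ℝ] V) : ℕ :=
  sInf {n | ∃ L : List V, L.length = n ∧ (∀ β ∈ L, R.IsSimpleRoot β) ∧
    (L.map reflAlong).prod = w}

end FiniteRootSystem

section SubwordComplex

open FiniteRootSystem

variable {V : Type*} [NormedAddCommGroup V] [InnerProductSpace ℝ V] [FiniteDimensional ℝ V]

/-- The product of the reflections of the letters of the word `Q` at the positions in `X`,
taken in increasing order of positions. -/
noncomputable def prodQ {m : ℕ} (Q : Fin m → V) (X : Finset (Fin m)) : V ≃ₗᵢ[ℝ] V :=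
  ((X.sort (· ≤ ·)).map (fun k => reflAlong (Q k))).prod

/-- A facet of the subword complex `SC(Q, ρ)`: a set of positions whose complement forms
a reduced expression for `ρ` as a subword of `Q`.  Here the word `Q` is recorded by the
simple roots of its letters, the corresponding simple reflections being `reflAlong (Q k)`. -/
def IsSCFacet (R : FiniteRootSystem V) {m : ℕ} (Q : Fin m → V) (ρ : V ≃ₗᵢ[ℝ] V)
    (I : Finset (Fin m)) : Prop :=
  prodQ Q Iᶜ = ρ ∧ Iᶜ.card = R.len ρ

/-- The root function of a facet `I`: `r(I, k) = Π Q_{[k−1]∖I} (α_{q_k})`. -/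
noncomputable def rootf {m : ℕ} (Q : Fin m → V) (I : Finset (Fin m)) (k : Fin m) : V :=
  prodQ Q (Finset.univ.filter (fun x => x < k ∧ x ∉ I)) (Q k)

end SubwordComplex

/-! ### Auxiliary development -/

section Aux

set_option linter.unusedSectionVars false

variable {V : Type*} [NormedAddCommGroup V] [InnerProductSpace ℝ V] [FiniteDimensional ℝ V]

theorem reflAlong_apply' (v x : V) :
    reflAlong v x = x - (2 * ⟪v, x⟫ / ⟪v, v⟫) • v := by
  rw [reflAlong, Submodule.reflection_apply, Submodule.starProjection_orthogonal_val,
    Submodule.starProjection_singleton, real_inner_self_eq_norm_sq]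
  simp only [RCLike.ofReal_real_eq_id, id_eq]
  match_scalars <;> ring

theorem reflAlong_self' (v : V) : reflAlong v v = -v :=
  Submodule.reflection_orthogonalComplement_singleton_eq_neg v

theorem reflAlong_symm' (v : V) : (reflAlong v).symm = reflAlong v := Submodule.reflection_symm

theorem reflAlong_reflAlong' (v x : V) : reflAlong v (reflAlong v x) = x :=
  Submodule.reflection_reflection _ x

theorem reflAlong_sq (v : V) : reflAlong v * reflAlong v = 1 := by
  ext x; exact reflAlong_reflAlong' v x

theorem reflAlong_conj (g : V ≃ₗᵢ[ℝ] V) (v : V) :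
    reflAlong (g v) = g * reflAlong v * g⁻¹ := by
  ext x
  show reflAlong (g v) x = g (reflAlong v (g.symm x))
  rw [reflAlong_apply', reflAlong_apply', map_sub, map_smul, g.apply_symm_apply,
    ← g.inner_map_map v (g.symm x), g.apply_symm_apply, ← g.inner_map_map v v]

/-- Shorthand: the product of the reflections along the roots of a list. -/
noncomputable def piL (L : List V) : V ≃ₗᵢ[ℝ] V := (L.map reflAlong).prod

namespace FiniteRootSystem

variable (R : FiniteRootSystem V)

@[simp] theorem piL_nil : piL (V := V) [] = 1 := rfl

@[simp] theorem piL_cons (a : V) (L : List V) :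
    piL (a :: L) = reflAlong a * piL L := by
  simp [piL]

theorem piL_mem_W (L : List V) (h : ∀ β ∈ L, β ∈ R.Φ) : piL L ∈ R.W := by
  induction L with
  | nil => exact R.W.one_mem
  | cons a L ih =>
    rw [piL_cons]
    exact R.W.mul_mem (R.refl_mem a (h a (by simp)))
      (ih fun β hβ => h β (by simp [hβ]))

theorem pos_or_neg {β : V} (h : β ∈ R.Φ) : β ∈ R.PosRoots ∨ β ∈ R.NegRoots := by
  rcases lt_or_gt_of_ne (R.f_ne β h) with h' | h'
  · exact Or.inr ⟨h, h'⟩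
  · exact Or.inl ⟨h, h'⟩

theorem not_pos_and_neg {β : V} (h1 : β ∈ R.PosRoots) (h2 : β ∈ R.NegRoots) : False :=
  absurd h1.2 (not_lt.mpr h2.2.le)

theorem neg_mem_neg {β : V} (h : β ∈ R.PosRoots) : -β ∈ R.NegRoots :=
  ⟨R.neg_mem β h.1, by simpa using neg_neg_of_pos (α := ℝ) h.2⟩

/-- Key lemma: the reflection along a simple root permutes the positive roots other
than itself. -/
theorem simple_refl_pos {β γ : V} (hβ : R.IsSimpleRoot β) (hγ : γ ∈ R.PosRoots)
    (hne : γ ≠ β) : reflAlong β γ ∈ R.PosRoots := by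
  have hΦ : reflAlong β γ ∈ R.Φ :=
    R.stable _ (R.refl_mem β hβ.1.1) γ hγ.1
  rcases R.pos_or_neg hΦ with h | h
  · exact h
  exfalso
  set c : ℝ := 2 * ⟪β, γ⟫ / ⟪β, β⟫ with hc
  have hrefl : reflAlong β γ = γ - c • β := reflAlong_apply' β γ
  set δ : V := -(reflAlong β γ) with hδ
  have hδpos : δ ∈ R.PosRoots := by
    refine ⟨R.neg_mem _ h.1, ?_⟩
    rw [hδ, map_neg]
    exact neg_pos.mpr h.2
  have hsum : γ + δ = c • β := by
    rw [hδ, hrefl]; abel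
  have hcpos : 0 < c := by
    have hf : R.f γ + R.f δ = c * R.f β := by
      rw [← map_add, hsum, map_smul]; rfl
    have h1 : 0 < c * R.f β := hf ▸ add_pos hγ.2 hδpos.2
    rcases mul_pos_iff.mp h1 with h2 | h2
    · exact h2.1
    · exact absurd hβ.1.2 (not_lt.mpr h2.2.le)
  have hcone : ∀ x ∈ R.PosRoots, R.InPosCone (c⁻¹ • x) := by
    intro x hx
    exact ⟨{x}, fun _ => c⁻¹, by simpa using hx, fun _ _ => inv_nonneg.mpr hcpos.le,
      by simp⟩
  have hdecomp : β = c⁻¹ • γ + c⁻¹ • δ := by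
    rw [← smul_add, hsum, smul_smul, inv_mul_cancel₀ hcpos.ne', one_smul]
  obtain ⟨a, ha0, hax⟩ := hβ.2 _ _ (hcone γ hγ) (hcone δ hδpos) hdecomp
  have hγβ : γ = (c * a) • β := by
    have := congrArg (fun z => c • z) hax
    simpa [smul_smul, mul_inv_cancel₀ hcpos.ne', mul_comm] using this
  rcases R.smul_mem β hβ.1.1 (c * a) (hγβ ▸ hγ.1) with h1 | h1
  · exact hne (by rw [hγβ, h1, one_smul])
  · nlinarith [mul_nonneg hcpos.le ha0]

theorem mul_symm_apply (e₁ e₂ : V ≃ₗᵢ[ℝ] V) (x : V) :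
    (e₁ * e₂).symm x = e₂.symm (e₁.symm x) := rfl

theorem invSet_subset_pos (w : V ≃ₗᵢ[ℝ] V) : R.invSet w ⊆ R.PosRoots :=
  fun _ h => h.1

theorem invSet_one : R.invSet (1 : V ≃ₗᵢ[ℝ] V) = ∅ := by
  ext β
  simp only [invSet, Set.mem_setOf_eq, Set.mem_empty_iff_false, iff_false, not_and]
  intro h1 h2
  exact R.not_pos_and_neg h1 h2

theorem mem_invSet_iff {w : V ≃ₗᵢ[ℝ] V} {β : V} :
    β ∈ R.invSet w ↔ β ∈ R.PosRoots ∧ w.symm β ∈ R.NegRoots := Iff.rfl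

/-- Step lemma, part used in the strong exchange: stripping a letter. -/
theorem mem_invSet_of_cons {a δ : V} {w : V ≃ₗᵢ[ℝ] V} (ha : R.IsSimpleRoot a)
    (hδ : δ ∈ R.invSet (reflAlong a * w)) (hne : δ ≠ a) :
    reflAlong a δ ∈ R.invSet w := by
  refine ⟨R.simple_refl_pos ha hδ.1 hne, ?_⟩
  have := hδ.2
  rwa [mul_symm_apply, reflAlong_symm'] at this

/-- Strong exchange property. -/
theorem exchange (L : List V) (hL : ∀ β ∈ L, R.IsSimpleRoot β) :
    ∀ δ ∈ R.invSet (piL L), ∃ M : List V, (∀ β ∈ M, R.IsSimpleRoot β) ∧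
      M.length + 1 = L.length ∧ reflAlong δ * piL L = piL M := by
  induction L with
  | nil =>
    intro δ hδ
    rw [piL_nil, R.invSet_one] at hδ
    exact absurd hδ (Set.notMem_empty δ)
  | cons b L ih =>
    intro δ hδ
    rw [piL_cons] at hδ
    by_cases hne : δ = b
    · refine ⟨L, fun β hβ => hL β (by simp [hβ]), by simp, ?_⟩
      rw [piL_cons, hne, ← mul_assoc, reflAlong_sq, one_mul]
    · have hb : R.IsSimpleRoot b := hL b (by simp)
      have h1 : reflAlong b δ ∈ R.invSet (piL L) := R.mem_invSet_of_cons hb hδ hne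
      obtain ⟨M, hM, hMlen, hMeq⟩ := ih (fun β hβ => hL β (by simp [hβ])) _ h1
      refine ⟨b :: M, ?_, by simpa using hMlen, ?_⟩
      · intro β hβ
        rcases List.mem_cons.mp hβ with h | h
        · exact h ▸ hb
        · exact hM β h
      · have hconj : reflAlong (reflAlong b δ) =
            reflAlong b * reflAlong δ * (reflAlong b)⁻¹ :=
          reflAlong_conj (reflAlong b) δ
        have hinv : (reflAlong b)⁻¹ = reflAlong b := by
          rw [inv_eq_iff_mul_eq_one, reflAlong_sq]
        rw [piL_cons, piL_cons, ← hMeq, hconj, hinv]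
        simp only [mul_assoc]
        rw [← mul_assoc (reflAlong b) (reflAlong b), reflAlong_sq, one_mul]

theorem len_le (L : List V) (hL : ∀ β ∈ L, R.IsSimpleRoot β) :
    R.len (piL L) ≤ L.length :=
  Nat.sInf_le ⟨L, rfl, hL, rfl⟩

theorem len_witness (w : V ≃ₗᵢ[ℝ] V) (L : List V) (hL : ∀ β ∈ L, R.IsSimpleRoot β)
    (hw : piL L = w) : ∃ M : List V, M.length = R.len w ∧
      (∀ β ∈ M, R.IsSimpleRoot β) ∧ piL M = w := by
  have hne : {n | ∃ L' : List V, L'.length = n ∧ (∀ β ∈ L', R.IsSimpleRoot β) ∧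
      (L'.map reflAlong).prod = w}.Nonempty := ⟨L.length, L, rfl, hL, hw⟩
  obtain ⟨M, h1, h2, h3⟩ := Nat.sInf_mem hne
  exact ⟨M, h1, h2, h3⟩

theorem len_tail (a : V) (L : List V) (hL : ∀ β ∈ (a :: L), R.IsSimpleRoot β)
    (h : R.len (piL (a :: L)) = (a :: L).length) :
    R.len (piL L) = L.length := by
  have hle := R.len_le L (fun β hβ => hL β (by simp [hβ]))
  rcases hle.lt_or_eq with hlt | he
  · exfalso
    obtain ⟨M, hM1, hM2, hM3⟩ := R.len_witness (piL L) L
      (fun β hβ => hL β (by simp [hβ])) rfl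
    have : piL (a :: M) = piL (a :: L) := by rw [piL_cons, piL_cons, hM3]
    have hle2 := R.len_le (a :: M) (by
      intro β hβ
      rcases List.mem_cons.mp hβ with h' | h'
      · exact h' ▸ hL a (by simp)
      · exact hM2 β h')
    rw [this, h] at hle2
    simp only [List.length_cons] at hle2
    omega
  · exact he

/-- The list of inversions read off from a word. -/
noncomputable def invList : List V → List V
  | [] => []
  | a :: L => a :: (invList L).map (reflAlong a)

@[simp] theorem invList_nil : invList (V := V) [] = [] := rfl

@[simp] theorem invList_cons (a : V) (L : List V) :
    invList (a :: L) = a :: (invList L).map (reflAlong a) := by rw [invList]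

@[simp] theorem invList_length (L : List V) : (invList L).length = L.length := by
  induction L with
  | nil => rfl
  | cons a L ih => simp [ih]

theorem invList_getElem (L : List V) (n : ℕ) (hn : n < L.length) :
    (invList L)[n]'(by simpa using hn) = piL (L.take n) (L[n]'hn) := by
  induction L generalizing n with
  | nil => simp at hn
  | cons a L ih =>
    cases n with
    | zero => simp
    | succ n =>
      have hn' : n < L.length := by simpa using hn
      simp only [invList_cons, List.getElem_cons_succ, List.getElem_map,
        List.take_succ_cons, piL_cons]
      rw [ih n hn']
      rfl

/-- Step lemma A: description of the inversion set after adding a letter which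
increases the inversion set. -/
theorem invSet_cons {a : V} {w : V ≃ₗᵢ[ℝ] V} (ha : R.IsSimpleRoot a)
    (hw : w.symm a ∈ R.PosRoots) :
    R.invSet (reflAlong a * w) = insert a ((reflAlong a) '' R.invSet w) := by
  ext β
  constructor
  · rintro ⟨h1, h2⟩
    rw [mul_symm_apply, reflAlong_symm'] at h2
    by_cases hne : β = a
    · exact Or.inl hne
    · refine Or.inr ⟨reflAlong a β, ⟨R.simple_refl_pos ha h1 hne, h2⟩, ?_⟩
      exact reflAlong_reflAlong' a β
  · rintro (h | ⟨γ, hγ, rfl⟩)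
    · subst h
      refine ⟨ha.1, ?_⟩
      rw [mul_symm_apply, reflAlong_symm', reflAlong_self', map_neg]
      exact R.neg_mem_neg hw
    · have hγa : γ ≠ a := by
        rintro rfl
        exact R.not_pos_and_neg hw hγ.2
      refine ⟨R.simple_refl_pos ha hγ.1 hγa, ?_⟩
      rw [mul_symm_apply, reflAlong_symm', reflAlong_reflAlong']
      exact hγ.2

/-- Main abstract lemma: for a reduced word, the inversion list is duplicate-free and
enumerates the inversion set. -/
theorem invList_main (L : List V) (hL : ∀ β ∈ L, R.IsSimpleRoot β)
    (hred : R.len (piL L) = L.length) :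
    (invList L).Nodup ∧ {x | x ∈ invList L} = R.invSet (piL L) := by
  induction L with
  | nil => simp [R.invSet_one]
  | cons a L ih =>
    have hLsimple : ∀ β ∈ L, R.IsSimpleRoot β := fun β hβ => hL β (by simp [hβ])
    have ha : R.IsSimpleRoot a := hL a (by simp)
    have hred' : R.len (piL L) = L.length := R.len_tail a L hL hred
    obtain ⟨hnodup, hset⟩ := ih hLsimple hred'
    -- `a` is not an inversion of the tail
    have hnotin : a ∉ R.invSet (piL L) := by
      intro hmem
      obtain ⟨M, hM1, hM2, hM3⟩ := R.exchange L hLsimple a hmem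
      rw [← piL_cons] at hM3
      have := R.len_le M hM1
      rw [← hM3, hred] at this
      simp only [List.length_cons] at this
      omega
    have hsymmΦ : (piL L).symm a ∈ R.Φ := by
      have hWinv : (piL L)⁻¹ ∈ R.W :=
        R.W.inv_mem (R.piL_mem_W L fun β hβ => (hLsimple β hβ).1.1)
      exact R.stable _ hWinv a ha.1.1
    have hpos : (piL L).symm a ∈ R.PosRoots := by
      rcases R.pos_or_neg hsymmΦ with h | h
      · exact h
      · exact absurd ⟨ha.1, h⟩ hnotin
    rw [piL_cons, R.invSet_cons ha hpos]
    constructor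
    · rw [invList_cons, List.nodup_cons]
      constructor
      · intro hmem
        obtain ⟨γ, hγ1, hγ2⟩ := List.mem_map.mp hmem
        have hγpos : γ ∈ R.PosRoots := by
          have : γ ∈ R.invSet (piL L) := hset ▸ hγ1
          exact this.1
        have : γ = -a := by
          have := congrArg (reflAlong a) hγ2
          rwa [reflAlong_reflAlong', reflAlong_self'] at this
        subst this
        exact R.not_pos_and_neg hγpos (R.neg_mem_neg ha.1)
      · exact hnodup.map (reflAlong a).injective
    · rw [invList_cons]
      ext x
      simp only [List.mem_cons, Set.mem_setOf_eq, List.mem_map, Set.mem_insert_iff,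
        Set.mem_image]
      constructor
      · rintro (h | ⟨γ, hγ1, hγ2⟩)
        · exact Or.inl h
        · exact Or.inr ⟨γ, hset ▸ hγ1, hγ2⟩
      · rintro (h | ⟨γ, hγ1, hγ2⟩)
        · exact Or.inl h
        · exact Or.inr ⟨γ, by rw [← hset] at hγ1; exact hγ1, hγ2⟩

end FiniteRootSystem

end Aux

open FiniteRootSystem in
/-- The root function of a facet restricts to a bijection from the complement of the facet
onto the inversion set of `ρ`. -/
theorem rootf_bijOn_inversions
    {V : Type*} [NormedAddCommGroup V] [InnerProductSpace ℝ V] [FiniteDimensional ℝ V]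
    (R : FiniteRootSystem V) {m : ℕ} (Q : Fin m → V) (hQ : ∀ k, R.IsSimpleRoot (Q k))
    (ρ : V ≃ₗᵢ[ℝ] V) (hρ : ρ ∈ R.W)
    (I : Finset (Fin m)) (hI : IsSCFacet R Q ρ I) :
    Set.BijOn (rootf Q I) (↑(Iᶜ) : Set (Fin m)) (R.invSet ρ) := by
  obtain ⟨hprod, hcard⟩ := hI
  set l : List (Fin m) := Iᶜ.sort (· ≤ ·) with hl
  set L : List V := l.map Q with hLdef
  have hπ : piL L = ρ := by
    rw [← hprod]
    show ((l.map Q).map reflAlong).prod = _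
    rw [List.map_map]
    rfl
  have hsimple : ∀ β ∈ L, R.IsSimpleRoot β := by
    intro β hβ
    obtain ⟨k, _, rfl⟩ := List.mem_map.mp hβ
    exact hQ k
  have hllen : l.length = Iᶜ.card := Finset.length_sort _
  have hLlen : L.length = l.length := List.length_map _
  have hlen : R.len (piL L) = L.length := by
    rw [hπ, hLlen, hllen, hcard]
  obtain ⟨hnodup, hset⟩ := R.invList_main L hsimple hlen
  have hilen : (invList L).length = L.length := invList_length L
  have hnodupl : l.Nodup := Finset.sort_nodup _ _
  have hslt : l.SortedLT := Iᶜ.sortedLT_sort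
  have hsle : l.Pairwise (· ≤ ·) := Finset.pairwise_sort _ _
  -- key pointwise computation
  have key : ∀ (n : ℕ) (hn : n < l.length),
      rootf Q I (l[n]'hn) = (invList L)[n]'(by omega) := by
    intro n hn
    have hmemtake : ∀ x : Fin m, x ∈ l.take n ↔ x ∈ Iᶜ ∧ x < l[n]'hn := by
      intro x
      constructor
      · intro hx
        obtain ⟨j, hj, hjx⟩ := List.mem_take_iff_getElem.mp hx
        have hjn : j < n := lt_of_lt_of_le hj (min_le_left _ _)
        have hjl : j < l.length := by omega
        refine ⟨(Finset.mem_sort _).mp (hjx ▸ List.getElem_mem hjl), ?_⟩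
        rw [← hjx]
        exact hslt.strictMono_get (show (⟨j, hjl⟩ : Fin l.length) < ⟨n, hn⟩ from hjn)
      · rintro ⟨hx1, hx2⟩
        have hxl : x ∈ l := (Finset.mem_sort _).mpr hx1
        obtain ⟨j, hj, hjx⟩ := List.getElem_of_mem hxl
        have hjn : j < n := by
          rcases lt_trichotomy j n with h | h | h
          · exact h
          · exfalso; subst h; rw [← hjx] at hx2; exact lt_irrefl _ hx2
          · exfalso
            have : l[n]'hn < l[j]'hj :=
              hslt.strictMono_get (show (⟨n, hn⟩ : Fin l.length) < ⟨j, hj⟩ from h)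
            rw [hjx] at this
            exact absurd hx2 (not_lt.mpr this.le)
        exact List.mem_take_iff_getElem.mpr ⟨j, by omega, hjx⟩
    have hsort_eq : (Finset.univ.filter
        (fun x => x < l[n]'hn ∧ x ∉ I)).sort (· ≤ ·) = l.take n := by
      refine List.Perm.eq_of_pairwise' (Finset.pairwise_sort _ _)
        (hsle.sublist (List.take_sublist n l)) ?_
      refine (List.perm_ext_iff_of_nodup (Finset.sort_nodup _ _)
        (hnodupl.sublist (List.take_sublist n l))).mpr ?_
      intro x
      rw [Finset.mem_sort, Finset.mem_filter, hmemtake]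
      simp [Finset.mem_compl, and_comm]
    rw [invList_getElem L n (by omega)]
    show prodQ Q _ _ = _
    rw [prodQ, hsort_eq]
    have h1 : ((l.take n).map (fun k => reflAlong (Q k))).prod = piL (L.take n) := by
      rw [hLdef, ← List.map_take, piL, List.map_map]
      rfl
    have h2 : L[n]'(by omega) = Q (l[n]'hn) := List.getElem_map _
    rw [h1, h2]
  constructor
  · -- MapsTo
    intro k hk
    have hkl : k ∈ l := (Finset.mem_sort _).mpr hk
    obtain ⟨n, hn, hkn⟩ := List.getElem_of_mem hkl
    have : rootf Q I k = (invList L)[n]'(by omega) := by rw [← hkn]; exact key n hn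
    rw [this, ← hπ, ← hset]
    exact List.getElem_mem _
  constructor
  · -- InjOn
    intro k₁ hk₁ k₂ hk₂ heq
    obtain ⟨n₁, hn₁, hkn₁⟩ := List.getElem_of_mem ((Finset.mem_sort (α := Fin m) (· ≤ ·)).mpr hk₁)
    obtain ⟨n₂, hn₂, hkn₂⟩ := List.getElem_of_mem ((Finset.mem_sort (α := Fin m) (· ≤ ·)).mpr hk₂)
    rw [← hkn₁, ← hkn₂] at heq ⊢
    rw [key n₁ hn₁, key n₂ hn₂] at heq
    have hn₁' : n₁ < (invList L).length := by rw [hilen, hLlen]; exact hn₁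
    have hn₂' : n₂ < (invList L).length := by rw [hilen, hLlen]; exact hn₂
    have : n₁ = n₂ :=
      (hnodup.getElem_inj_iff (hi := hn₁') (hj := hn₂')).mp heq
    simp [this]
  · -- SurjOn
    intro β hβ
    rw [← hπ, ← hset] at hβ
    obtain ⟨n, hn, hβn⟩ := List.getElem_of_mem hβ
    have hn' : n < l.length := by omega
    refine ⟨l[n]'hn', ?_, ?_⟩
    · exact (Finset.mem_sort _).mp (List.getElem_mem hn')
    · rw [key n hn', hβn]
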